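/- arXiv:1911.01627 — 5 statements merged into one kernel-verified Lean document; each statement's English description precedes it below -/
import Mathlib

section
/- The bicharacter r satisfies r(y₁, g⁻¹y₁) = N·t⁻². (In the paper's notation: r(λ₀(1) ⊗ e^{−λ₀}λ₀(1)) = N(x−y)⁻².) -/
open TensorProduct

noncomputable section

/-- `Rb` is the commutative `ℂ`-algebra `ℂ[g,g⁻¹] ⊗ ℂ[y₁,y₂,…]`, realized as Laurent
polynomials in one variable with coefficients in a polynomial ring in countably many
variables.  It is the underlying algebra of Borcherds's rank-one lattice bialgebra `V^L`. -/
abbrev Rb : Type := LaurentPolynomial (MvPolynomial ℕ ℂ)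

/-- `Lt` is the Laurent polynomial ring `ℂ[t,t⁻¹]`. -/
abbrev Lt : Type := LaurentPolynomial ℂ

/-- `gp n` is the element `gⁿ` of `Rb`. -/
def gp (n : ℤ) : Rb := LaurentPolynomial.T n

/-- `yv k` is the variable `y_k` of `Rb` (only `k ≥ 1` is used). -/
def yv (k : ℕ) : Rb := LaurentPolynomial.C (MvPolynomial.X k)

/-- `tp n` is the element `tⁿ` of `ℂ[t,t⁻¹]`. -/
def tp (n : ℤ) : Lt := LaurentPolynomial.T n

/-- `r(y₁, g⁻¹y₁) = N·t⁻²`. -/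
theorem bicharacter_y1_ginv_y1
    (N : ℕ) (hNpos : 0 < N) (hNeven : Even N)
    (D : Derivation ℂ Rb Rb) (hDg : D (gp 1) = yv 1)
    (hDy : ∀ k : ℕ, 1 ≤ k → D (yv k) = ((k : ℂ) + 1) • yv (k + 1))
    (Δ : Rb →ₐ[ℂ] Rb ⊗[ℂ] Rb)
    (hΔg : ∀ n : ℤ, Δ (gp n) = gp n ⊗ₜ[ℂ] gp n)
    (hΔD : ∀ v : Rb, Δ (D v) =
      (TensorProduct.map D.toLinearMap LinearMap.id
        + TensorProduct.map LinearMap.id D.toLinearMap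
        : Rb ⊗[ℂ] Rb →ₗ[ℂ] Rb ⊗[ℂ] Rb) (Δ v))
    (d : Derivation ℂ Lt Lt) (hd : ∀ n : ℤ, d (tp n) = (n : ℂ) • tp (n - 1))
    (ι : Lt ≃ₐ[ℂ] Lt) (hι : ι (tp 1) = - tp 1)
    (r : Rb →ₗ[ℂ] Rb →ₗ[ℂ] Lt)
    (hB1 : ∀ n m : ℤ, r (gp n) (gp m) = tp (n * m * (N : ℤ)))
    (hB2 : ∀ v w : Rb, r w v = ι (r v w))
    (hB3 : ∀ v w : Rb, r (D v) w = d (r v w))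
    (hB4 : ∀ v₁ v₂ w : Rb, r (v₁ * v₂) w =
      TensorProduct.lift ((LinearMap.mul ℂ Lt).compl₁₂ (r v₁) (r v₂)) (Δ w)) :
    r (yv 1) (gp (-1) * yv 1) = (N : ℂ) • tp (-2) := by
  -- ι sends tp (-1) to - tp (-1)
  have hT : ∀ a b : ℤ, tp a * tp b = tp (a + b) := by
    intro a b; exact (LaurentPolynomial.T_add a b).symm
  have h1 : tp 1 * tp (-1) = 1 := by
    rw [hT]; norm_num [tp, LaurentPolynomial.T_zero]
  have h2 : ι (tp 1) * ι (tp (-1)) = 1 := by rw [← map_mul, h1, map_one]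
  rw [hι] at h2
  have hinv : ι (tp (-1)) = - tp (-1) := by
    linear_combination (-(tp (-1))) * h2 - ι (tp (-1)) * h1
  -- r(y₁, g) = N • tp (N-1)
  have hy1g : r (yv 1) (gp 1) = (N : ℂ) • tp ((N : ℤ) - 1) := by
    rw [← hDg, hB3, hB1]
    have := hd (N : ℤ)
    simpa using this
  -- r(g⁻¹ y₁, g) = N • tp (-1)
  have hstep : r (gp (-1) * yv 1) (gp 1) = (N : ℂ) • tp (-1) := by
    rw [hB4, hΔg]
    simp only [TensorProduct.lift.tmul, LinearMap.compl₁₂_apply, LinearMap.mul_apply',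
      hB1, hy1g]
    rw [mul_smul_comm, hT]
    congr 1
    ring_nf
  -- r(g, g⁻¹ y₁) = - N • tp (-1)
  have hswap : r (gp 1) (gp (-1) * yv 1) = -((N : ℂ) • tp (-1)) := by
    rw [hB2, hstep, map_smul, hinv, smul_neg]
  -- conclude
  have hfin := hB3 (gp 1) (gp (-1) * yv 1)
  rw [hDg] at hfin
  rw [hfin, hswap]
  have hd1 := hd (-1)
  rw [map_neg, d.map_smul, hd1]
  push_cast
  rw [smul_smul]
  norm_num
end
end

section
/- The bicharacter r satisfies r(g⁻¹y₁, g⁻¹y₁) = N·t⁻². (In the paper's notation: r(e^{−λ₀}λ₀(1) ⊗ e^{−λ₀}λ₀(1)) = N(x−y)⁻².) -/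
open TensorProduct

noncomputable section

/-- `r(g⁻¹y₁, g⁻¹y₁) = N·t⁻²`. -/
theorem bicharacter_ginv_y1_ginv_y1
    (N : ℕ) (hNpos : 0 < N) (hNeven : Even N)
    (D : Derivation ℂ Rb Rb) (hDg : D (gp 1) = yv 1)
    (hDy : ∀ k : ℕ, 1 ≤ k → D (yv k) = ((k : ℂ) + 1) • yv (k + 1))
    (Δ : Rb →ₐ[ℂ] Rb ⊗[ℂ] Rb)
    (hΔg : ∀ n : ℤ, Δ (gp n) = gp n ⊗ₜ[ℂ] gp n)
    (hΔD : ∀ v : Rb, Δ (D v) =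
      (TensorProduct.map D.toLinearMap LinearMap.id
        + TensorProduct.map LinearMap.id D.toLinearMap
        : Rb ⊗[ℂ] Rb →ₗ[ℂ] Rb ⊗[ℂ] Rb) (Δ v))
    (d : Derivation ℂ Lt Lt) (hd : ∀ n : ℤ, d (tp n) = (n : ℂ) • tp (n - 1))
    (ι : Lt ≃ₐ[ℂ] Lt) (hι : ι (tp 1) = - tp 1)
    (r : Rb →ₗ[ℂ] Rb →ₗ[ℂ] Lt)
    (hB1 : ∀ n m : ℤ, r (gp n) (gp m) = tp (n * m * (N : ℤ)))
    (hB2 : ∀ v w : Rb, r w v = ι (r v w))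
    (hB3 : ∀ v w : Rb, r (D v) w = d (r v w))
    (hB4 : ∀ v₁ v₂ w : Rb, r (v₁ * v₂) w =
      TensorProduct.lift ((LinearMap.mul ℂ Lt).compl₁₂ (r v₁) (r v₂)) (Δ w)) :
    r (gp (-1) * yv 1) (gp (-1) * yv 1) = (N : ℂ) • tp (-2) := by
  have htpmul : ∀ n m : ℤ, tp n * tp m = tp (n + m) := fun n m =>
    (LaurentPolynomial.T_add n m).symm
  have htp0 : tp 0 = 1 := LaurentPolynomial.T_zero
  have hgp0 : gp 0 = 1 := LaurentPolynomial.T_zero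
  have hgmul : ∀ n m : ℤ, gp n * gp m = gp (n + m) := fun n m =>
    (LaurentPolynomial.T_add n m).symm
  -- ι (tp (-1)) = - tp (-1)
  have hinv : tp (-1) * tp 1 = 1 := by rw [htpmul]; norm_num [htp0]
  have hιm1 : ι (tp (-1)) = - tp (-1) := by
    have h1 : ι (tp (-1)) * tp 1 = -1 := by
      have : ι (tp (-1)) * ι (tp 1) = 1 := by rw [← map_mul, hinv, map_one]
      rw [hι] at this
      linear_combination -this
    calc ι (tp (-1)) = ι (tp (-1)) * (tp 1 * tp (-1)) := by
          rw [mul_comm (tp 1), hinv, mul_one]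
      _ = (ι (tp (-1)) * tp 1) * tp (-1) := by ring
      _ = - tp (-1) := by rw [h1]; ring
  -- r(y₁, g) = N t^(N-1)
  have h1 : r (yv 1) (gp 1) = ((N : ℤ) : ℂ) • tp ((N : ℤ) - 1) := by
    rw [← hDg, hB3, hB1]
    norm_num [hd]
  set a : Rb := gp (-1) * yv 1 with ha
  -- r(a, g) = N t^(-1)
  have h2 : r a (gp 1) = ((N : ℤ) : ℂ) • tp (-1) := by
    rw [ha, hB4, hΔg]
    rw [TensorProduct.lift.tmul, LinearMap.compl₁₂_apply, LinearMap.mul_apply',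
      hB1, h1, mul_smul_comm, htpmul]
    ring_nf
  -- r(g, a) = -(N t^(-1))
  have h3 : r (gp 1) a = -(((N : ℤ) : ℂ) • tp (-1)) := by
    rw [hB2 a (gp 1), h2, map_smul, hιm1, smul_neg]
  -- r(y₁, a) = N t^(-2)
  have h4 : r (yv 1) a = ((N : ℤ) : ℂ) • tp (-2) := by
    rw [← hDg, hB3, h3]
    rw [show -(((N : ℤ) : ℂ) • tp (-1)) = (-((N : ℤ) : ℂ)) • tp (-1) by rw [neg_smul]]
    rw [Derivation.map_smul, hd]
    norm_num [smul_smul]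
  -- r(y₁, 1) = 0
  have h5 : r (yv 1) (1 : Rb) = 0 := by
    rw [← hgp0, ← hDg, hB3, hB1]
    norm_num [hd]
  -- r(g⁻¹, 1) = 1
  have h6 : r (gp (-1)) (1 : Rb) = 1 := by
    rw [← hgp0, hB1]
    norm_num [htp0]
  -- Δ(y₁) = y₁ ⊗ g + g ⊗ y₁
  have hΔy : Δ (yv 1) = yv 1 ⊗ₜ[ℂ] gp 1 + gp 1 ⊗ₜ[ℂ] yv 1 := by
    rw [← hDg, hΔD, hΔg]
    simp [TensorProduct.map_tmul, hDg]
  -- Δ(a) = a ⊗ 1 + 1 ⊗ a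
  have hΔa : Δ a = a ⊗ₜ[ℂ] (1 : Rb) + (1 : Rb) ⊗ₜ[ℂ] a := by
    rw [ha, map_mul, hΔg, hΔy, mul_add]
    rw [Algebra.TensorProduct.tmul_mul_tmul, Algebra.TensorProduct.tmul_mul_tmul,
      hgmul]
    norm_num [hgp0, mul_comm]
  -- conclude
  rw [hB4, hΔa, map_add, TensorProduct.lift.tmul, TensorProduct.lift.tmul,
    LinearMap.compl₁₂_apply, LinearMap.compl₁₂_apply, LinearMap.mul_apply',
    LinearMap.mul_apply', h5, h6, h4]
  push_cast
  ring
end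
end

section
/- The bicharacter r satisfies r(g y₁, g⁻¹y₁) = N·t⁻². (In the paper's notation: r(e^{λ₀}λ₀(1) ⊗ e^{−λ₀}λ₀(1)) = N(x−y)⁻².) -/
open TensorProduct

noncomputable section

open LaurentPolynomial

lemma half {M : Type*} [AddCommGroup M] [Module ℂ M] {a b : M} (h : a + a = b + b) : a = b := by
  have h2 : (2:ℂ) • a = (2:ℂ) • b := by rw [two_smul, two_smul]; exact h
  exact smul_right_injective M two_ne_zero h2

lemma tp_mul (a b : ℤ) : tp a * tp b = tp (a + b) := (T_add a b).symm

lemma iota_tp (ι : Lt ≃ₐ[ℂ] Lt) (hι : ι (tp 1) = - tp 1) (n : ℤ) :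
    ι (tp n) = (-1 : Lt) ^ n.natAbs * tp n := by
  have h1 : tp (-1) * tp 1 = 1 := by rw [tp_mul]; norm_num [tp, T_zero]
  have h2 : ι (tp (-1)) * (- tp 1) = 1 := by rw [← hι, ← map_mul, h1, map_one]
  have hm1 : ι (tp (-1)) = - tp (-1) := by
    calc ι (tp (-1)) = (ι (tp (-1)) * (- tp 1)) * (- tp (-1)) := by
          rw [mul_assoc, neg_mul_neg, mul_comm (tp 1), h1, mul_one]
      _ = - tp (-1) := by rw [h2, one_mul]
  induction n using Int.induction_on with
  | zero => simpa [tp, T_zero] using map_one ι.toAlgHom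
  | succ k ih =>
      have : tp ((k : ℤ) + 1) = tp k * tp 1 := (tp_mul _ _).symm
      rw [this, map_mul, ih, hι]
      have : ((k : ℤ) + 1).natAbs = k + 1 := by omega
      rw [this, pow_succ, Int.natAbs_natCast]
      ring
  | pred k ih =>
      have : tp (-(k : ℤ) - 1) = tp (-k) * tp (-1) := by rw [tp_mul]; ring_nf
      rw [this, map_mul, ih, hm1]
      have h3 : (-(k : ℤ) - 1).natAbs = k + 1 := by omega
      have h4 : (-(k : ℤ)).natAbs = k := by omega
      rw [h3, h4, pow_succ]
      ring

lemma iota_tp_even (ι : Lt ≃ₐ[ℂ] Lt) (hι : ι (tp 1) = - tp 1) {n : ℤ} (hn : Even n) :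
    ι (tp n) = tp n := by
  rw [iota_tp ι hι, (Int.natAbs_even.mpr hn).neg_one_pow, one_mul]

lemma iota_tp_odd (ι : Lt ≃ₐ[ℂ] Lt) (hι : ι (tp 1) = - tp 1) {n : ℤ} (hn : Odd n) :
    ι (tp n) = - tp n := by
  rw [iota_tp ι hι, (Int.natAbs_odd.mpr hn).neg_one_pow, neg_one_mul]


/-- `r(g y₁, g⁻¹y₁) = N·t⁻²`. -/
theorem bicharacter_g_y1_ginv_y1
    (N : ℕ) (hNpos : 0 < N) (hNeven : Even N)
    (D : Derivation ℂ Rb Rb) (hDg : D (gp 1) = yv 1)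
    (hDy : ∀ k : ℕ, 1 ≤ k → D (yv k) = ((k : ℂ) + 1) • yv (k + 1))
    (Δ : Rb →ₐ[ℂ] Rb ⊗[ℂ] Rb)
    (hΔg : ∀ n : ℤ, Δ (gp n) = gp n ⊗ₜ[ℂ] gp n)
    (hΔD : ∀ v : Rb, Δ (D v) =
      (TensorProduct.map D.toLinearMap LinearMap.id
        + TensorProduct.map LinearMap.id D.toLinearMap
        : Rb ⊗[ℂ] Rb →ₗ[ℂ] Rb ⊗[ℂ] Rb) (Δ v))
    (d : Derivation ℂ Lt Lt) (hd : ∀ n : ℤ, d (tp n) = (n : ℂ) • tp (n - 1))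
    (ι : Lt ≃ₐ[ℂ] Lt) (hι : ι (tp 1) = - tp 1)
    (r : Rb →ₗ[ℂ] Rb →ₗ[ℂ] Lt)
    (hB1 : ∀ n m : ℤ, r (gp n) (gp m) = tp (n * m * (N : ℤ)))
    (hB2 : ∀ v w : Rb, r w v = ι (r v w))
    (hB3 : ∀ v w : Rb, r (D v) w = d (r v w))
    (hB4 : ∀ v₁ v₂ w : Rb, r (v₁ * v₂) w =
      TensorProduct.lift ((LinearMap.mul ℂ Lt).compl₁₂ (r v₁) (r v₂)) (Δ w)) :
    r (gp 1 * yv 1) (gp (-1) * yv 1) = (N : ℂ) • tp (-2) := by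
  set u : Rb := gp 1 * yv 1 with hu
  -- basic gp facts
  have h2g : gp 2 = gp 1 * gp 1 := by
    show (T (2:ℤ) : Rb) = T 1 * T 1
    rw [← T_add]
    norm_num
  have hginv1 : gp (-1) * gp 1 = 1 := by
    show (T (-1:ℤ) : Rb) * T 1 = 1
    rw [← T_add]; norm_num [T_zero]
  have hDg2 : D (gp 2) = u + u := by
    rw [h2g, Derivation.leibniz, hDg, smul_eq_mul]
  have hDginv : gp 1 * D (gp (-1)) = -(gp (-1) * yv 1) := by
    have h0 : D (gp (-1) * gp 1) = 0 := by rw [hginv1, Derivation.map_one_eq_zero]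
    rw [Derivation.leibniz, hDg, smul_eq_mul, smul_eq_mul] at h0
    linear_combination h0
  -- coproduct of u
  have hΔu : Δ u = u ⊗ₜ[ℂ] gp 2 + gp 2 ⊗ₜ[ℂ] u := by
    have h := hΔD (gp 2)
    rw [hΔg, hDg2, map_add, LinearMap.add_apply, TensorProduct.map_tmul,
      TensorProduct.map_tmul] at h
    simp only [Derivation.coeFn_coe, LinearMap.id_coe, id_eq] at h
    rw [hDg2, TensorProduct.add_tmul, TensorProduct.tmul_add] at h
    exact half (by rw [h]; abel)
  -- first-slot values
  have hru : ∀ m : ℤ, r u (gp m) = ((m * N : ℤ) : ℂ) • tp (2 * m * N - 1) := by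
    intro m
    apply half
    have h := hB3 (gp 2) (gp m)
    rw [hDg2, map_add, LinearMap.add_apply, hB1, hd] at h
    rw [h, ← add_smul]
    congr 1
    push_cast; ring
  have hrug1 : r u (gp 1) = ((N : ℤ) : ℂ) • tp (2 * N - 1) := by
    have := hru 1; rw [this]; norm_num
  have hrugm1 : r u (gp (-1)) = ((-(N:ℤ) : ℤ) : ℂ) • tp (-(2 * N) - 1) := by
    have := hru (-1); rw [this]; norm_num
  -- parity facts
  have hodd1 : Odd (2 * (N:ℤ) - 1) := ⟨(N:ℤ) - 1, by ring⟩
  have hodd2 : Odd (-(2 * (N:ℤ)) - 1) := ⟨-(N:ℤ) - 1, by ring⟩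
  -- second-slot / derivative values
  have hA : r (gp 1) u = (-(N:ℂ)) • tp (2 * N - 1) := by
    rw [hB2 u (gp 1), hrug1, map_smul, iota_tp_odd ι hι hodd1]
    push_cast; rw [smul_neg, ← neg_smul]
  have hBv : r (D (gp (-1))) (gp 2) = ((-(2*(N:ℤ)) : ℤ) : ℂ) • tp (-(2 * N) - 1) := by
    rw [hB3, hB1, hd]
    norm_num
  have hCv : r (gp 1) (gp 2) = tp (2 * N) := by
    rw [hB1]; norm_num
  have hDv : r (D (gp (-1))) u = ((N:ℂ) * (-(2*(N:ℂ)) - 1)) • tp (-(2 * N) - 2) := by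
    rw [hB3, hB2 u (gp (-1)), hrugm1, map_smul, iota_tp_odd ι hι hodd2]
    rw [smul_neg, ← neg_smul, Derivation.map_smul, hd]
    rw [smul_smul]
    push_cast
    congr 1
    · ring
    · congr 1; ring
  -- the product formula
  have hprod : r (gp 1 * D (gp (-1))) u = (-(N:ℂ)) • tp (-2) := by
    rw [hB4, hΔu, map_add, TensorProduct.lift.tmul, TensorProduct.lift.tmul]
    simp only [LinearMap.compl₁₂_apply, LinearMap.mul_apply']
    rw [hA, hBv, hCv, hDv]
    rw [smul_mul_assoc, mul_smul_comm, smul_smul, mul_smul_comm, tp_mul, tp_mul]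
    have e1 : (2 * (N:ℤ) - 1) + (-(2 * N) - 1) = -2 := by ring
    have e2 : (2 * (N:ℤ)) + (-(2 * N) - 2) = -2 := by ring
    rw [e1, e2, ← add_smul]
    congr 1
    push_cast; ring
  -- conclude
  have key : r u (gp (-1) * yv 1) = - ι (r (gp 1 * D (gp (-1))) u) := by
    have hneg : gp (-1) * yv 1 = -(gp 1 * D (gp (-1))) := by rw [hDginv, neg_neg]
    rw [hneg, map_neg, hB2 (gp 1 * D (gp (-1))) u]
  rw [key, hprod, map_smul, iota_tp_even ι hι ⟨-1, by ring⟩, neg_smul, neg_neg]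
end
end

section
/- The bicharacter r satisfies r(y₁², g⁻²y₁²) = 2N²·t⁻⁴, and consequently r(g⁻²y₁², g⁻²y₁²) = 2N²·t⁻⁴. (In the paper's notation: r((λ₀(1))² ⊗ e^{−2λ₀}(λ₀(1))²) = 2N²(x−y)⁻⁴ and r(e^{−2λ₀}(λ₀(1))² ⊗ e^{−2λ₀}(λ₀(1))²) = 2N²(x−y)⁻⁴.) -/
open TensorProduct

noncomputable section

/-- `r(y₁², g⁻²y₁²) = 2N²·t⁻⁴`, and consequently `r(g⁻²y₁², g⁻²y₁²) = 2N²·t⁻⁴`. -/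
theorem bicharacter_y1_sq_values
    (N : ℕ) (hNpos : 0 < N) (hNeven : Even N)
    (D : Derivation ℂ Rb Rb) (hDg : D (gp 1) = yv 1)
    (hDy : ∀ k : ℕ, 1 ≤ k → D (yv k) = ((k : ℂ) + 1) • yv (k + 1))
    (Δ : Rb →ₐ[ℂ] Rb ⊗[ℂ] Rb)
    (hΔg : ∀ n : ℤ, Δ (gp n) = gp n ⊗ₜ[ℂ] gp n)
    (hΔD : ∀ v : Rb, Δ (D v) =
      (TensorProduct.map D.toLinearMap LinearMap.id
        + TensorProduct.map LinearMap.id D.toLinearMap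
        : Rb ⊗[ℂ] Rb →ₗ[ℂ] Rb ⊗[ℂ] Rb) (Δ v))
    (d : Derivation ℂ Lt Lt) (hd : ∀ n : ℤ, d (tp n) = (n : ℂ) • tp (n - 1))
    (ι : Lt ≃ₐ[ℂ] Lt) (hι : ι (tp 1) = - tp 1)
    (r : Rb →ₗ[ℂ] Rb →ₗ[ℂ] Lt)
    (hB1 : ∀ n m : ℤ, r (gp n) (gp m) = tp (n * m * (N : ℤ)))
    (hB2 : ∀ v w : Rb, r w v = ι (r v w))
    (hB3 : ∀ v w : Rb, r (D v) w = d (r v w))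
    (hB4 : ∀ v₁ v₂ w : Rb, r (v₁ * v₂) w =
      TensorProduct.lift ((LinearMap.mul ℂ Lt).compl₁₂ (r v₁) (r v₂)) (Δ w)) :
    r (yv 1 ^ 2) (gp (-2) * yv 1 ^ 2) = (2 * (N : ℂ) ^ 2) • tp (-4) ∧
    r (gp (-2) * yv 1 ^ 2) (gp (-2) * yv 1 ^ 2) = (2 * (N : ℂ) ^ 2) • tp (-4) := by
  have tpmul : ∀ a b : ℤ, tp a * tp b = tp (a+b) := fun a b => (LaurentPolynomial.T_add a b).symm
  have gpmul : ∀ a b : ℤ, gp a * gp b = gp (a+b) := fun a b => (LaurentPolynomial.T_add a b).symm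
  have tp0 : tp 0 = 1 := LaurentPolynomial.T_zero
  have gp0 : gp 0 = 1 := LaurentPolynomial.T_zero
  -- ι on powers of t
  have ιm1 : ι (tp (-1)) = - tp (-1) := by
    have h10 : tp 1 * tp (-1) = 1 := by rw [tpmul]; norm_num [tp0]
    have h2 := congrArg ι h10
    rw [map_mul, map_one, hι] at h2
    linear_combination (-(tp (-1))) * h2 - ι (tp (-1)) * h10
  have ιT : ∀ n : ℤ, ι (tp n) = ((-1 : ℂ)^(n.natAbs)) • tp n := by
    intro n
    induction n using Int.induction_on with
    | zero => simp [tp0]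
    | succ i ih =>
      have h : tp ((i:ℤ)+1) = tp i * tp 1 := (tpmul _ _).symm
      rw [h, map_mul, ih, hι]
      have : ((i:ℤ)+1).natAbs = i + 1 := by omega
      rw [this, pow_succ, smul_mul_assoc, mul_neg, tpmul]
      simp [mul_smul, smul_neg]
    | pred i ih =>
      have h : tp (-(i:ℤ)-1) = tp (-i) * tp (-1) := by rw [tpmul]; ring_nf
      rw [h, map_mul, ih, ιm1]
      have h2 : (-(i:ℤ)-1).natAbs = (-(i:ℤ)).natAbs + 1 := by omega
      rw [h2, pow_succ, smul_mul_assoc, mul_neg, tpmul]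
      rw [mul_smul, neg_one_smul]
  have ιeven : ∀ m : ℤ, Even m → ι (tp m) = tp m := by
    intro m hm
    rw [ιT, (Int.natAbs_even.mpr hm).neg_one_pow, one_smul]
  have ιodd : ∀ m : ℤ, Odd m → ι (tp m) = - tp m := by
    intro m hm
    rw [ιT, (Int.natAbs_odd.mpr hm).neg_one_pow, neg_one_smul]
  have hNe : Even ((N:ℤ)) := by exact_mod_cast hNeven
  -- lift evaluation helper
  have hlift : ∀ (v₁ v₂ a b : Rb),
      (TensorProduct.lift ((LinearMap.mul ℂ Lt).compl₁₂ (r v₁) (r v₂))) (a ⊗ₜ[ℂ] b)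
        = r v₁ a * r v₂ b := by
    intro v₁ v₂ a b
    rw [TensorProduct.lift.tmul, LinearMap.compl₁₂_apply, LinearMap.mul_apply']
  -- Δ of y₁
  have ΔY : Δ (yv 1) = yv 1 ⊗ₜ[ℂ] gp 1 + gp 1 ⊗ₜ[ℂ] yv 1 := by
    have h := hΔD (gp 1)
    rw [hDg, hΔg] at h
    simpa [TensorProduct.map_tmul, hDg] using h
  -- r(y₁, gⁿ)
  have hA : ∀ n : ℤ, r (yv 1) (gp n) = ((n * (N:ℤ) : ℤ) : ℂ) • tp (n * (N:ℤ) - 1) := by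
    intro n
    rw [← hDg, hB3, hB1, hd]
    norm_num
  have hry1 : r (yv 1) 1 = 0 := by
    have h := hA 0
    rw [gp0] at h
    simpa using h
  have hryG : r (yv 1) (gp 1) = ((N:ℤ) : ℂ) • tp ((N:ℤ) - 1) := by
    have h := hA 1
    simpa using h
  -- r(g, y₁)
  have hrGy : r (gp 1) (yv 1) = (-(N:ℤ) : ℂ) • tp ((N:ℤ) - 1) := by
    rw [hB2, hryG, map_smul, ιodd _ (hNe.sub_odd odd_one)]
    push_cast
    rw [smul_neg, ← neg_smul]
  -- r(y₁, y₁)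
  have hryy : r (yv 1) (yv 1) = ((-(N:ℤ) : ℂ) * ((N:ℤ) - 1 : ℂ)) • tp ((N:ℤ) - 2) := by
    have h := hB3 (gp 1) (yv 1)
    rw [hDg] at h
    rw [h, hrGy, Derivation.map_smul, hd, smul_smul]
    have e : (N:ℤ)-1-1 = (N:ℤ)-2 := by ring
    rw [e]
    norm_num
  -- r(g⁻¹, y₁)
  have hrg1y : r (gp (-1)) (yv 1) = ((N:ℤ) : ℂ) • tp (-(N:ℤ) - 1) := by
    have hodd : Odd (-(N:ℤ) - 1) := (hNe.neg).sub_odd odd_one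
    have h := hA (-1)
    rw [hB2, h, map_smul, ιodd _ (by simpa using hodd)]
    push_cast
    rw [smul_neg, ← neg_smul]
    norm_num
  -- Δ of g⁻¹y₁
  have Δgy : Δ (gp (-1) * yv 1) = (gp (-1) * yv 1) ⊗ₜ[ℂ] 1 + 1 ⊗ₜ[ℂ] (gp (-1) * yv 1) := by
    rw [map_mul, hΔg, ΔY, mul_add, Algebra.TensorProduct.tmul_mul_tmul,
      Algebra.TensorProduct.tmul_mul_tmul, gpmul]
    norm_num [gp0]
  -- r(g⁻¹y₁, y₁) = N t⁻²
  have Egy : r (gp (-1) * yv 1) (yv 1) = ((N:ℤ) : ℂ) • tp (-2) := by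
    rw [hB4, ΔY, map_add, hlift, hlift, hrg1y, hryG, hryy]
    have hb : r (gp (-1)) (gp 1) = tp (-(N:ℤ)) := by
      have := hB1 (-1) 1; rw [this]; norm_num
    rw [hb, smul_mul_smul_comm, mul_smul_comm, tpmul, tpmul]
    have he1 : -(N:ℤ) - 1 + ((N:ℤ) - 1) = -2 := by ring
    have he2 : -(N:ℤ) + ((N:ℤ) - 2) = -2 := by ring
    rw [he1, he2, ← add_smul]
    congr 1
    push_cast
    ring
  have Eyy' : r (yv 1) (gp (-1) * yv 1) = ((N:ℤ) : ℂ) • tp (-2) := by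
    rw [hB2, Egy, map_smul, ιeven _ (by decide)]
  -- squares
  have hy2 : yv 1 ^ 2 = yv 1 * yv 1 := sq (yv 1)
  have hsq : gp (-2) * yv 1 ^ 2 = (gp (-1) * yv 1) * (gp (-1) * yv 1) := by
    rw [hy2]
    have : gp (-2) = gp (-1) * gp (-1) := by rw [gpmul]; norm_num
    rw [this]; ring
  -- Δ of g⁻²y₁²
  have Δw : Δ (gp (-2) * yv 1 ^ 2) =
      (gp (-2) * yv 1 ^ 2) ⊗ₜ[ℂ] 1 + (gp (-1) * yv 1) ⊗ₜ[ℂ] (gp (-1) * yv 1)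
        + (gp (-1) * yv 1) ⊗ₜ[ℂ] (gp (-1) * yv 1) + 1 ⊗ₜ[ℂ] (gp (-2) * yv 1 ^ 2) := by
    rw [hsq, map_mul, Δgy]
    rw [add_mul, mul_add, mul_add, Algebra.TensorProduct.tmul_mul_tmul,
      Algebra.TensorProduct.tmul_mul_tmul, Algebra.TensorProduct.tmul_mul_tmul,
      Algebra.TensorProduct.tmul_mul_tmul]
    rw [← hsq]
    simp only [one_mul, mul_one]
    abel
  -- r(y₁², 1) = 0
  have E0 : r (yv 1 ^ 2) 1 = 0 := by
    rw [hy2, hB4, map_one, Algebra.TensorProduct.one_def, hlift, hry1, zero_mul]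
  -- r(y₁², g⁻¹y₁) = 0
  have E1 : r (yv 1 ^ 2) (gp (-1) * yv 1) = 0 := by
    rw [hy2, hB4, Δgy, map_add, hlift, hlift, hry1, zero_mul, mul_zero, add_zero]
  -- first main value
  have key : ((N:ℤ) : ℂ) • tp (-2) * ((N:ℤ) : ℂ) • tp (-2) = ((N:ℂ)^2) • tp (-4) := by
    rw [smul_mul_smul_comm, tpmul]
    norm_num [sq]
  have M1 : r (yv 1 ^ 2) (gp (-2) * yv 1 ^ 2) = (2 * (N : ℂ) ^ 2) • tp (-4) := by
    nth_rewrite 1 [hy2]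
    rw [hB4, Δw]
    simp only [map_add, hlift]
    simp only [hry1, Eyy', mul_zero, zero_mul, add_zero, zero_add]
    rw [key, ← add_smul]
    congr 1
    ring
  refine ⟨M1, ?_⟩
  -- second main value
  have hb : r (gp (-2)) 1 = 1 := by
    have h := hB1 (-2) 0
    rw [gp0] at h
    rw [h]; norm_num [tp0]
  rw [hB4, Δw]
  simp only [map_add, hlift]
  simp only [E0, E1, hb, mul_zero, add_zero, zero_add, one_mul]
  exact M1
end
end

section
/- Let α = (1/(2N)) g⁻² y₁² ∈ R. Then the singular multiplication satisfies μ(α ⊗ α) = α ⊗ α ⊗ 1 + (1/N) (g⁻¹y₁) ⊗ (g⁻¹y₁) ⊗ t⁻² + (1/2)·1 ⊗ 1 ⊗ t⁻⁴ in R ⊗_ℂ R ⊗_ℂ ℂ[t,t⁻¹]. (This is Step 1 of the proof that Borcherds's functor Φ from (A,H,S_B)-vertex algebras to vertex algebras is not an equivalence: the computation of μ_{V^L}(α ⊗ α), where α is the image of the conformal vector ω₀ = ½b₋₁²|0⟩ of the rank-one lattice vertex algebra V_L.) -/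
open TensorProduct

noncomputable section

/-- The singular multiplication `μ : R ⊗ R → R ⊗ R ⊗ ℂ[t,t⁻¹]`, given on `v ⊗ w` by
`μ(v ⊗ w) = Σ (v₍₁₎ ⊗ w₍₁₎) ⊗ r(v₍₂₎, w₍₂₎)` where `Δ(v) = Σ v₍₁₎ ⊗ v₍₂₎` and
`Δ(w) = Σ w₍₁₎ ⊗ w₍₂₎` in Sweedler notation. -/
def muMap (Δ : Rb →ₐ[ℂ] Rb ⊗[ℂ] Rb) (r : Rb →ₗ[ℂ] Rb →ₗ[ℂ] Lt) :
    Rb ⊗[ℂ] Rb →ₗ[ℂ] Rb ⊗[ℂ] (Rb ⊗[ℂ] Lt) :=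
  (TensorProduct.assoc ℂ Rb Rb Lt).toLinearMap
    ∘ₗ TensorProduct.map LinearMap.id (TensorProduct.lift r)
    ∘ₗ (TensorProduct.tensorTensorTensorComm ℂ Rb Rb Rb Rb).toLinearMap
    ∘ₗ TensorProduct.map Δ.toLinearMap Δ.toLinearMap

set_option maxHeartbeats 1600000 in
set_option synthInstance.maxHeartbeats 1000000 in
/-- For `α = (1/(2N)) g⁻² y₁²`, the singular multiplication satisfies
`μ(α ⊗ α) = α ⊗ α ⊗ 1 + (1/N)(g⁻¹y₁) ⊗ (g⁻¹y₁) ⊗ t⁻² + (1/2)·1 ⊗ 1 ⊗ t⁻⁴`. -/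
theorem singular_multiplication_of_conformal_vector
    (N : ℕ) (hNpos : 0 < N) (hNeven : Even N)
    (D : Derivation ℂ Rb Rb) (hDg : D (gp 1) = yv 1)
    (hDy : ∀ k : ℕ, 1 ≤ k → D (yv k) = ((k : ℂ) + 1) • yv (k + 1))
    (Δ : Rb →ₐ[ℂ] Rb ⊗[ℂ] Rb)
    (hΔg : ∀ n : ℤ, Δ (gp n) = gp n ⊗ₜ[ℂ] gp n)
    (hΔD : ∀ v : Rb, Δ (D v) =
      (TensorProduct.map D.toLinearMap LinearMap.id
        + TensorProduct.map LinearMap.id D.toLinearMap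
        : Rb ⊗[ℂ] Rb →ₗ[ℂ] Rb ⊗[ℂ] Rb) (Δ v))
    (d : Derivation ℂ Lt Lt) (hd : ∀ n : ℤ, d (tp n) = (n : ℂ) • tp (n - 1))
    (ι : Lt ≃ₐ[ℂ] Lt) (hι : ι (tp 1) = - tp 1)
    (r : Rb →ₗ[ℂ] Rb →ₗ[ℂ] Lt)
    (hB1 : ∀ n m : ℤ, r (gp n) (gp m) = tp (n * m * (N : ℤ)))
    (hB2 : ∀ v w : Rb, r w v = ι (r v w))
    (hB3 : ∀ v w : Rb, r (D v) w = d (r v w))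
    (hB4 : ∀ v₁ v₂ w : Rb, r (v₁ * v₂) w =
      TensorProduct.lift ((LinearMap.mul ℂ Lt).compl₁₂ (r v₁) (r v₂)) (Δ w))
    (α : Rb) (hα : α = ((1 : ℂ) / (2 * N)) • (gp (-2) * yv 1 ^ 2)) :
    muMap Δ r (α ⊗ₜ[ℂ] α)
      = α ⊗ₜ[ℂ] (α ⊗ₜ[ℂ] 1)
        + ((1 : ℂ) / N) •
            ((gp (-1) * yv 1) ⊗ₜ[ℂ] ((gp (-1) * yv 1) ⊗ₜ[ℂ] tp (-2)))
        + ((1 : ℂ) / 2) • ((1 : Rb) ⊗ₜ[ℂ] ((1 : Rb) ⊗ₜ[ℂ] tp (-4))) := by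

  classical
  have hNC : (N : ℂ) ≠ 0 := Nat.cast_ne_zero.mpr hNpos.ne'
  have hT : ∀ a b : ℤ, gp a * gp b = gp (a + b) := fun a b =>
    (LaurentPolynomial.T_add a b).symm
  have ht : ∀ a b : ℤ, tp a * tp b = tp (a + b) := fun a b =>
    (LaurentPolynomial.T_add a b).symm
  have hg0 : gp 0 = 1 := LaurentPolynomial.T_zero
  have ht0 : tp 0 = 1 := LaurentPolynomial.T_zero
  -- ι on powers of t
  have hι1 : ι (1 : Lt) = 1 := map_one ι
  have hιn : ∀ n : ℕ, ι (tp (n : ℤ)) = (-1 : ℂ) ^ n • tp (n : ℤ) := by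
    intro n
    induction n with
    | zero => simpa [ht0] using hι1
    | succ k ih =>
      have e : tp ((k + 1 : ℕ) : ℤ) = tp (k : ℤ) * tp 1 := by
        push_cast; rw [ht]
      rw [e, map_mul, ih, hι, smul_mul_assoc, mul_neg]
      module
  have hιneg1 : ι (tp (-1)) = - tp (-1) := by
    have hu : tp (-1) * tp 1 = 1 := by rw [ht]; norm_num [ht0]
    have h1 : ι (tp (-1)) * (- tp 1) = 1 := by
      rw [← hι, ← map_mul, hu, hι1]
    have h2 : (- tp 1) * (- tp (-1)) = 1 := by
      rw [neg_mul_neg, mul_comm, hu]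
    calc ι (tp (-1)) = ι (tp (-1)) * ((- tp 1) * (- tp (-1))) := by rw [h2, mul_one]
      _ = (ι (tp (-1)) * (- tp 1)) * (- tp (-1)) := by ring
      _ = - tp (-1) := by rw [h1, one_mul]
  have hιm : ∀ n : ℕ, ι (tp (-(n : ℤ))) = (-1 : ℂ) ^ n • tp (-(n : ℤ)) := by
    intro n
    induction n with
    | zero => simpa [ht0] using hι1
    | succ k ih =>
      have e : tp (-((k + 1 : ℕ) : ℤ)) = tp (-(k : ℤ)) * tp (-1) := by
        push_cast; rw [ht]; ring_nf
      rw [e, map_mul, ih, hιneg1, smul_mul_assoc, mul_neg]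
      module
  have hι2 : ι (tp (-2)) = tp (-2) := by
    have h := hιm 2
    norm_num at h
    exact h
  have hιa : ι (tp ((N : ℤ) - 1)) = - tp ((N : ℤ) - 1) := by
    have hodd : Odd (N - 1) := Nat.Even.sub_odd hNpos hNeven odd_one
    have h := hιn (N - 1)
    rw [hodd.neg_one_pow] at h
    have e : ((N - 1 : ℕ) : ℤ) = (N : ℤ) - 1 := by omega
    rw [e] at h
    simpa using h
  have hιb : ι (tp (-(N : ℤ) - 1)) = - tp (-(N : ℤ) - 1) := by
    have hodd : Odd (N + 1) := hNeven.add_one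
    have h := hιm (N + 1)
    rw [hodd.neg_one_pow] at h
    have e : (-((N + 1 : ℕ) : ℤ)) = -(N : ℤ) - 1 := by push_cast; ring
    rw [e] at h
    simpa using h
  -- comultiplication values
  have hΔ1 : Δ (1 : Rb) = (1 : Rb) ⊗ₜ[ℂ] (1 : Rb) := by
    rw [map_one, Algebra.TensorProduct.one_def]
  have hΔy : Δ (yv 1) = yv 1 ⊗ₜ[ℂ] gp 1 + gp 1 ⊗ₜ[ℂ] yv 1 := by
    have h := hΔD (gp 1)
    rw [hDg, hΔg 1] at h
    simpa [TensorProduct.map_tmul, hDg] using h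
  have hgg1 : gp (-1) * gp 1 = 1 := by rw [hT]; norm_num [hg0]
  have hΔβ : Δ (gp (-1) * yv 1) =
      (gp (-1) * yv 1) ⊗ₜ[ℂ] 1 + 1 ⊗ₜ[ℂ] (gp (-1) * yv 1) := by
    rw [map_mul, hΔg (-1), hΔy, mul_add]
    simp only [Algebra.TensorProduct.tmul_mul_tmul, hgg1]
  have hAββ : gp (-2) * yv 1 ^ 2 = (gp (-1) * yv 1) * (gp (-1) * yv 1) := by
    have h2 : gp (-2) = gp (-1) * gp (-1) := by rw [hT]; norm_num
    rw [h2]; ring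
  have hΔA : Δ (gp (-2) * yv 1 ^ 2) =
      (gp (-2) * yv 1 ^ 2) ⊗ₜ[ℂ] 1
        + (gp (-1) * yv 1) ⊗ₜ[ℂ] (gp (-1) * yv 1)
        + (gp (-1) * yv 1) ⊗ₜ[ℂ] (gp (-1) * yv 1)
        + 1 ⊗ₜ[ℂ] (gp (-2) * yv 1 ^ 2) := by
    rw [hAββ, map_mul, hΔβ, add_mul, mul_add, mul_add]
    simp only [Algebra.TensorProduct.tmul_mul_tmul, one_mul, mul_one, ← hAββ]
    abel
  -- elementary r-values
  have hrg1 : ∀ n : ℤ, r (gp n) (1 : Rb) = 1 := fun n => by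
    have h := hB1 n 0
    rw [hg0] at h
    simpa [ht0] using h
  have hr11 : r (1 : Rb) (1 : Rb) = 1 := by
    have h := hrg1 0
    rwa [hg0] at h
  have hry1 : r (yv 1) (1 : Rb) = 0 := by
    have h := hB3 (gp 1) 1
    rw [hDg, hrg1 1] at h
    simpa using h
  have hryg1 : r (yv 1) (gp 1) = (N : ℂ) • tp ((N : ℤ) - 1) := by
    have h := hB3 (gp 1) (gp 1)
    rw [hDg, hB1, hd] at h
    norm_num at h
    convert h using 2 <;> push_cast <;> ring
  have hrygm1 : r (yv 1) (gp (-1)) = (-(N : ℂ)) • tp (-(N : ℤ) - 1) := by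
    have h := hB3 (gp 1) (gp (-1))
    rw [hDg, hB1, hd] at h
    norm_num at h
    rw [h, neg_smul]
  have hrg1y : r (gp 1) (yv 1) = (-(N : ℂ)) • tp ((N : ℤ) - 1) := by
    rw [hB2 (yv 1) (gp 1), hryg1, map_smul, hιa, smul_neg, ← neg_smul]
  have hrgm1y : r (gp (-1)) (yv 1) = (N : ℂ) • tp (-(N : ℤ) - 1) := by
    rw [hB2 (yv 1) (gp (-1)), hrygm1, map_smul, hιb, smul_neg, neg_smul, neg_neg]
  have hryy : r (yv 1) (yv 1) = ((-(N : ℂ)) * ((N : ℂ) - 1)) • tp ((N : ℤ) - 2) := by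
    have h := hB3 (gp 1) (yv 1)
    rw [hDg, hrg1y, Derivation.map_smul, hd] at h
    rw [h]
    have e : (N : ℤ) - 1 - 1 = (N : ℤ) - 2 := by ring
    rw [e]
    push_cast
    module
  -- composite r-values via B4
  have hrβy : r (gp (-1) * yv 1) (yv 1) = (N : ℂ) • tp (-2) := by
    have h := hB4 (gp (-1)) (yv 1) (yv 1)
    rw [hΔy] at h
    simp only [map_add, TensorProduct.lift.tmul, LinearMap.compl₁₂_apply,
      LinearMap.mul_apply'] at h
    rw [hrgm1y, hryg1, hB1, hryy, smul_mul_smul_comm, mul_smul_comm, ht, ht] at h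
    have e1 : -(N : ℤ) - 1 + ((N : ℤ) - 1) = -2 := by ring
    have e2 : -1 * 1 * (N : ℤ) + ((N : ℤ) - 2) = -2 := by ring
    rw [e1, e2] at h
    rw [h]
    module
  have hryβ : r (yv 1) (gp (-1) * yv 1) = (N : ℂ) • tp (-2) := by
    rw [hB2 (gp (-1) * yv 1) (yv 1), hrβy, map_smul, hι2]
  have hrβ1 : r (gp (-1) * yv 1) (1 : Rb) = 0 := by
    have h := hB4 (gp (-1)) (yv 1) 1
    rw [hΔ1] at h
    simp only [TensorProduct.lift.tmul, LinearMap.compl₁₂_apply,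
      LinearMap.mul_apply'] at h
    rw [hry1, mul_zero] at h
    exact h
  have hr1β : r (1 : Rb) (gp (-1) * yv 1) = 0 := by
    rw [hB2 (gp (-1) * yv 1) 1, hrβ1, map_zero]
  have hrββ : r (gp (-1) * yv 1) (gp (-1) * yv 1) = (N : ℂ) • tp (-2) := by
    have h := hB4 (gp (-1)) (yv 1) (gp (-1) * yv 1)
    rw [hΔβ] at h
    simp only [map_add, TensorProduct.lift.tmul, LinearMap.compl₁₂_apply,
      LinearMap.mul_apply'] at h
    rw [hry1, mul_zero, zero_add, hrg1, one_mul, hryβ] at h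
    exact h
  have hrA1 : r (gp (-2) * yv 1 ^ 2) (1 : Rb) = 0 := by
    have h := hB4 (gp (-1) * yv 1) (gp (-1) * yv 1) 1
    rw [hΔ1] at h
    simp only [TensorProduct.lift.tmul, LinearMap.compl₁₂_apply,
      LinearMap.mul_apply'] at h
    rw [hrβ1, mul_zero, ← hAββ] at h
    exact h
  have hr1A : r (1 : Rb) (gp (-2) * yv 1 ^ 2) = 0 := by
    rw [hB2 (gp (-2) * yv 1 ^ 2) 1, hrA1, map_zero]
  have hrAβ : r (gp (-2) * yv 1 ^ 2) (gp (-1) * yv 1) = 0 := by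
    have h := hB4 (gp (-1) * yv 1) (gp (-1) * yv 1) (gp (-1) * yv 1)
    rw [hΔβ] at h
    simp only [map_add, TensorProduct.lift.tmul, LinearMap.compl₁₂_apply,
      LinearMap.mul_apply'] at h
    rw [hrβ1, mul_zero, zero_mul, add_zero, ← hAββ] at h
    exact h
  have hrβA : r (gp (-1) * yv 1) (gp (-2) * yv 1 ^ 2) = 0 := by
    rw [hB2 (gp (-2) * yv 1 ^ 2) (gp (-1) * yv 1), hrAβ, map_zero]
  have hrAA : r (gp (-2) * yv 1 ^ 2) (gp (-2) * yv 1 ^ 2)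
      = ((2 : ℂ) * N * N) • tp (-4) := by
    have h := hB4 (gp (-1) * yv 1) (gp (-1) * yv 1) (gp (-2) * yv 1 ^ 2)
    rw [hΔA] at h
    simp only [map_add, TensorProduct.lift.tmul, LinearMap.compl₁₂_apply,
      LinearMap.mul_apply'] at h
    rw [hrβ1, hrβA, hrββ, mul_zero, zero_add, add_zero,
      smul_mul_smul_comm, ht, ← hAββ] at h
    norm_num at h
    rw [h]
    module
  -- expand the singular multiplication on A ⊗ A
  have hmu : muMap Δ r ((gp (-2) * yv 1 ^ 2) ⊗ₜ[ℂ] (gp (-2) * yv 1 ^ 2))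
      = (gp (-2) * yv 1 ^ 2) ⊗ₜ[ℂ] ((gp (-2) * yv 1 ^ 2) ⊗ₜ[ℂ] (1 : Lt))
        + ((4 : ℂ) * N) •
            ((gp (-1) * yv 1) ⊗ₜ[ℂ] ((gp (-1) * yv 1) ⊗ₜ[ℂ] tp (-2)))
        + ((2 : ℂ) * N * N) • ((1 : Rb) ⊗ₜ[ℂ] ((1 : Rb) ⊗ₜ[ℂ] tp (-4))) := by
    simp only [muMap, LinearMap.coe_comp, Function.comp_apply,
      TensorProduct.map_tmul, AlgHom.toLinearMap_apply, hΔA, LinearEquiv.coe_coe]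
    simp only [TensorProduct.tmul_add, TensorProduct.add_tmul, map_add,
      TensorProduct.tensorTensorTensorComm_tmul, TensorProduct.map_tmul,
      LinearMap.id_coe, id_eq, TensorProduct.lift.tmul, TensorProduct.assoc_tmul]
    rw [hr11, hrββ, hrAA, hrA1, hr1A, hrAβ, hrβA, hrβ1, hr1β]
    simp only [TensorProduct.tmul_zero, add_zero, zero_add, TensorProduct.tmul_smul]
    module
  -- conclude
  rw [hα]
  simp only [← TensorProduct.smul_tmul', TensorProduct.tmul_smul, map_smul, hmu,
    smul_add, smul_smul]
  match_scalars
  · ring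
  · field_simp
    ring
  · field_simp
end
end
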